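/- arXiv:2503.09458 — 3 statements merged into one kernel-verified Lean document; each statement's English description precedes it below -/
import Mathlib

section
/- Let G be a d-regular graph with k > d/2 an integer. Given a k-star decomposition of G (a partition of E(G) into stars with k edges each), the set A of vertices that are not the center of any star is an independent set of density 1 - d/(2k); i.e., |A| = |V(G)|(1 - d/(2k)) and no edge of G has both endpoints in A. -/
open SimpleGraph Set

/-- A `k`-star decomposition of `G`: a partition `P` of the edge set of `G` into parts of
size `k`, each part `S` being a star with designated center `ctr S` incident to all its edges. -/
def IsStarDecomp {V : Type*} (G : SimpleGraph V) (k : ℕ)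
    (P : Set (Set (Sym2 V))) (ctr : Set (Sym2 V) → V) : Prop :=
  (∀ S ∈ P, S.ncard = k) ∧
  (∀ S ∈ P, S ⊆ G.edgeSet) ∧
  (∀ S ∈ P, ∀ e ∈ S, ctr S ∈ e) ∧
  (∀ e ∈ G.edgeSet, ∃! S, S ∈ P ∧ e ∈ S)

theorem stmt_0 {V : Type*} [Fintype V] {d k : ℕ} (G : SimpleGraph V)
    [DecidableRel G.Adj]
    (hreg : G.IsRegularOfDegree d) (hk : d < 2 * k)
    (P : Set (Set (Sym2 V))) (ctr : Set (Sym2 V) → V)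
    (hP : IsStarDecomp G k P ctr)
    (A : Set V) (hA : A = {v : V | ∀ S ∈ P, ctr S ≠ v}) :
    (∀ a ∈ A, ∀ b ∈ A, ¬ G.Adj a b) ∧
    (A.ncard : ℝ) = (Fintype.card V : ℝ) * (1 - (d : ℝ) / (2 * k)) := by
  classical
  obtain ⟨hcard, hsub, hctr, huniq⟩ := hP
  subst hA
  have kpos : 0 < k := by omega
  -- pairwise disjointness of parts
  have hdisj : ∀ S₁ ∈ P, ∀ S₂ ∈ P, S₁ ≠ S₂ → Disjoint S₁ S₂ := by
    intro S₁ h₁ S₂ h₂ hne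
    rw [Set.disjoint_left]
    intro e he₁ he₂
    exact hne ((huniq e (hsub S₁ h₁ he₁)).unique ⟨h₁, he₁⟩ ⟨h₂, he₂⟩)
  -- ctr is injective on P
  have hinj : Set.InjOn ctr P := by
    intro S₁ h₁ S₂ h₂ heq
    by_contra hne
    have hsub1 : S₁ ⊆ G.incidenceSet (ctr S₁) :=
      fun e he => ⟨hsub S₁ h₁ he, hctr S₁ h₁ e he⟩
    have hsub2 : S₂ ⊆ G.incidenceSet (ctr S₁) :=
      fun e he => ⟨hsub S₂ h₂ he, heq ▸ hctr S₂ h₂ e he⟩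
    have hle : (S₁ ∪ S₂).ncard ≤ (G.incidenceSet (ctr S₁)).ncard :=
      Set.ncard_le_ncard (Set.union_subset hsub1 hsub2) (Set.toFinite _)
    have hcardU : (S₁ ∪ S₂).ncard = 2 * k := by
      rw [Set.ncard_union_eq (hdisj S₁ h₁ S₂ h₂ hne) (Set.toFinite _) (Set.toFinite _),
        hcard S₁ h₁, hcard S₂ h₂]
      ring
    have hdeg : (G.incidenceSet (ctr S₁)).ncard = d := by
      rw [Set.ncard_eq_toFinset_card', Set.toFinset_card,
        G.card_incidenceSet_eq_degree, hreg (ctr S₁)]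
    omega
  have hPfin : P.Finite := Set.toFinite _
  -- edge count
  have hedge : G.edgeSet.ncard = P.ncard * k := by
    have heq : G.edgeFinset = hPfin.toFinset.biUnion (fun S => (Set.toFinite S).toFinset) := by
      ext e
      simp only [mem_edgeFinset, Finset.mem_biUnion, Set.Finite.mem_toFinset]
      constructor
      · intro he
        obtain ⟨S, ⟨hS, heS⟩, -⟩ := huniq e he
        exact ⟨S, hS, heS⟩
      · rintro ⟨S, hS, heS⟩
        exact hsub S hS heS
    have hbi : (hPfin.toFinset.biUnion (fun S => (Set.toFinite S).toFinset)).card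
        = P.ncard * k := by
      rw [Finset.card_biUnion]
      · rw [Finset.sum_congr rfl (fun S hS => ?_), Finset.sum_const, smul_eq_mul,
          Set.ncard_eq_toFinset_card P hPfin]
        · rw [← Set.ncard_eq_toFinset_card S (Set.toFinite S)]
          exact hcard S (hPfin.mem_toFinset.mp hS)
      · intro S₁ h₁ S₂ h₂ hne
        rw [Function.onFun, Set.Finite.disjoint_toFinset]
        exact hdisj S₁ (hPfin.mem_toFinset.mp h₁) S₂ (hPfin.mem_toFinset.mp h₂) hne
    rw [Set.ncard_eq_toFinset_card', ← SimpleGraph.edgeFinset, heq, hbi]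
  -- degree sum
  have hsum : Fintype.card V * d = 2 * G.edgeSet.ncard := by
    have := G.sum_degrees_eq_twice_card_edges
    rw [Finset.sum_congr rfl (fun v _ => hreg v), Finset.sum_const, smul_eq_mul] at this
    rw [Set.ncard_eq_toFinset_card', ← SimpleGraph.edgeFinset]
    simpa using this
  -- complement of A is the image of ctr
  set A : Set V := {v : V | ∀ S ∈ P, ctr S ≠ v} with hAdef
  have hAc : Aᶜ = ctr '' P := by
    ext v
    simp only [hAdef, Set.mem_compl_iff, Set.mem_setOf_eq, Set.mem_image, not_forall]
    constructor
    · rintro ⟨S, hS, hv⟩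
      exact ⟨S, hS, by simpa using hv⟩
    · rintro ⟨S, hS, hv⟩
      exact ⟨S, hS, by simpa using hv⟩
  have hAcc : Aᶜ.ncard = P.ncard := by
    rw [hAc, Set.ncard_image_of_injOn hinj]
  have htot : A.ncard + P.ncard = Fintype.card V := by
    rw [← hAcc, Set.ncard_add_ncard_compl, Nat.card_eq_fintype_card]
  constructor
  · intro a ha b hb hab
    obtain ⟨S, ⟨hS, heS⟩, -⟩ := huniq s(a, b) (G.mem_edgeSet.mpr hab)
    have hc := hctr S hS _ heS
    rw [Sym2.mem_iff] at hc
    rcases hc with h | h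
    · exact ha S hS h
    · exact hb S hS h
  · have key : (Fintype.card V : ℝ) * d = 2 * (P.ncard * k) := by
      exact_mod_cast hedge ▸ hsum
    have hAcard : (A.ncard : ℝ) = (Fintype.card V : ℝ) - P.ncard := by
      have := htot
      push_cast [← this]
      ring
    rw [hAcard]
    have hk0 : (k : ℝ) ≠ 0 := Nat.cast_ne_zero.mpr kpos.ne'
    field_simp
    nlinarith [key]
end

section
/- Let H be a finite graph with e(H) = \ell |V(H)| for some natural number \ell. Then H has an orientation in which every in-degree equals \ell if and only if for every subset U of V(H), the number of edges with both endpoints in U is at most \ell |U|. -/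
open SimpleGraph Set

/-- An orientation of `G`, given as a relation `r` selecting, for each edge, exactly one
of its two directions. -/
def IsOrientation {V : Type*} (G : SimpleGraph V) (r : V → V → Prop) : Prop :=
  (∀ a b, r a b → G.Adj a b) ∧ (∀ a b, G.Adj a b → (r a b ↔ ¬ r b a))

/-- The number of edges of `G` with both endpoints in `U`. -/
noncomputable def edgesIn {V : Type*} (G : SimpleGraph V) (U : Set V) : ℕ :=
  {e ∈ G.edgeSet | ∀ x ∈ e, x ∈ U}.ncard

lemma forward_dir {V : Type*} [Fintype V] (H : SimpleGraph V) (ℓ : ℕ)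
    (r : V → V → Prop) (hor : IsOrientation H r)
    (hdeg : ∀ v : V, {u | r u v}.ncard = ℓ) (U : Set V) :
    edgesIn H U ≤ ℓ * U.ncard := by
  classical
  set T : Finset (V × V) := Finset.univ.filter (fun p => p.2 ∈ U ∧ r p.1 p.2) with hT
  have hsub : {e ∈ H.edgeSet | ∀ x ∈ e, x ∈ U} ⊆ (fun p : V × V => s(p.1, p.2)) '' ↑T := by
    rintro e ⟨he, hend⟩
    induction e with
    | _ a b =>
      have hab : H.Adj a b := H.mem_edgeSet.1 he
      rcases (em (r a b)) with h | h
      · exact ⟨(a, b), by simp [hT, hend b (by simp), h], rfl⟩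
      · have hba : r b a := by
          have := (hor.2 b a hab.symm)
          tauto
        exact ⟨(b, a), by simp [hT, hend a (by simp), hba], Sym2.eq_swap⟩
  have hTcard : T.card = ℓ * U.ncard := by
    have h1 : T.card = ∑ v ∈ U.toFinset, (T.filter fun p => p.2 = v).card := by
      apply Finset.card_eq_sum_card_fiberwise (f := Prod.snd)
      intro p hp
      have hp' : p ∈ T := hp
      simp only [hT, Finset.mem_filter] at hp'
      simpa using hp'.2.1
    have h2 : ∀ v ∈ U.toFinset, (T.filter fun p => p.2 = v).card = ℓ := by
      intro v hv
      have : (T.filter fun p => p.2 = v) =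
          (Finset.univ.filter fun u => r u v).image (fun u => (u, v)) := by
        ext ⟨a, b⟩
        simp only [hT, Finset.mem_filter, Finset.mem_image, Finset.mem_univ, true_and]
        constructor
        · rintro ⟨⟨_, hr⟩, rfl⟩; exact ⟨a, hr, rfl⟩
        · rintro ⟨u, hr, h⟩
          obtain ⟨rfl, rfl⟩ := Prod.mk.injEq .. ▸ h
          exact ⟨⟨by simpa using hv, hr⟩, rfl⟩
      rw [this, Finset.card_image_of_injective _ (fun a b h => by simpa using h)]
      rw [← hdeg v, Set.ncard_eq_toFinset_card']
      congr 1
      ext u; simp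
    rw [h1, Finset.sum_congr rfl h2, Finset.sum_const, Set.ncard_eq_toFinset_card',
      smul_eq_mul, mul_comm]
  calc edgesIn H U ≤ ((fun p : V × V => s(p.1, p.2)) '' ↑T).ncard := by
        apply Set.ncard_le_ncard hsub
    _ ≤ (↑T : Set (V × V)).ncard := Set.ncard_image_le (T : Set (V × V)).toFinite
    _ = T.card := Set.ncard_coe_finset T
    _ = ℓ * U.ncard := hTcard

theorem stmt_3 {V : Type*} [Fintype V] (H : SimpleGraph V) (ℓ : ℕ)
    (hcount : H.edgeSet.ncard = ℓ * Fintype.card V) :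
    (∃ r : V → V → Prop, IsOrientation H r ∧ ∀ v : V, {u | r u v}.ncard = ℓ) ↔
    (∀ U : Set V, edgesIn H U ≤ ℓ * U.ncard) := by
  constructor
  · rintro ⟨r, hor, hdeg⟩ U
    exact forward_dir H ℓ r hor hdeg U
  · intro hU
    classical
    -- Hall setup: index type is the edges, targets are (vertex, copy) pairs
    set t : H.edgeSet → Finset (V × Fin ℓ) :=
      fun e => Finset.univ.filter (fun p => p.1 ∈ e.1) with ht
    have hall : ∀ s : Finset H.edgeSet, s.card ≤ (s.biUnion t).card := by
      intro s
      set W : Finset V := s.biUnion (fun e => Finset.univ.filter (· ∈ e.1)) with hW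
      have hbiU : s.biUnion t = W ×ˢ (Finset.univ : Finset (Fin ℓ)) := by
        ext ⟨v, i⟩
        simp [ht, hW]
      have hcard1 : (s.biUnion t).card = W.card * ℓ := by
        rw [hbiU, Finset.card_product, Finset.card_univ, Fintype.card_fin]
      have hsub2 : (↑(s.image Subtype.val) : Set (Sym2 V)) ⊆
          {e ∈ H.edgeSet | ∀ x ∈ e, x ∈ (↑W : Set V)} := by
        rintro e he
        simp only [Finset.coe_image, Set.mem_image, Finset.mem_coe] at he
        obtain ⟨⟨e, hmem⟩, hes, rfl⟩ := he
        refine ⟨hmem, fun x hx => ?_⟩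
        simp only [hW, Finset.coe_biUnion, Set.mem_iUnion, Finset.mem_coe]
        exact ⟨⟨e, hmem⟩, hes, by simpa using hx⟩
      have hs2 : s.card ≤ edgesIn H (↑W : Set V) := by
        have : s.card = (s.image Subtype.val).card :=
          (Finset.card_image_of_injective _ Subtype.val_injective).symm
        rw [this, ← Set.ncard_coe_finset]
        exact Set.ncard_le_ncard hsub2 (Set.toFinite _)
      calc s.card ≤ edgesIn H (↑W : Set V) := hs2
        _ ≤ ℓ * (↑W : Set V).ncard := hU _
        _ = W.card * ℓ := by rw [Set.ncard_coe_finset, mul_comm]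
        _ = (s.biUnion t).card := hcard1.symm
    obtain ⟨f, hfinj, hft⟩ := (Finset.all_card_le_biUnion_card_iff_exists_injective t).1 hall
    have hhead : ∀ e : H.edgeSet, (f e).1 ∈ e.1 := by
      intro e
      have := hft e
      simpa [ht] using this
    -- the orientation
    refine ⟨fun a b => ∃ h : H.Adj a b, (f ⟨s(a, b), H.mem_edgeSet.2 h⟩).1 = b, ⟨?_, ?_⟩, ?_⟩
    · rintro a b ⟨h, -⟩; exact h
    · intro a b hab
      have hne : a ≠ b := hab.ne
      have hsw : (⟨s(b, a), H.mem_edgeSet.2 hab.symm⟩ : H.edgeSet) =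
          ⟨s(a, b), H.mem_edgeSet.2 hab⟩ := Subtype.ext (Sym2.eq_swap)
      have hmem := hhead ⟨s(a, b), H.mem_edgeSet.2 hab⟩
      rw [Sym2.mem_iff] at hmem
      constructor
      · rintro ⟨h0, hb⟩
        intro hba
        obtain ⟨h', ha⟩ := hba
        rw [hsw] at ha
        exact hne (ha.symm.trans hb)
      · intro hn
        refine ⟨hab, ?_⟩
        rcases hmem with ha | hb
        · exact absurd ⟨hab.symm, by rw [hsw]; exact ha⟩ hn
        · exact hb
    · -- in-degrees
      intro v
      set F : V → Finset H.edgeSet :=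
        fun w => Finset.univ.filter (fun e => (f e).1 = w) with hF
      have hCard : ∀ w : V, {u | ∃ h : H.Adj u w,
          (f ⟨s(u, w), H.mem_edgeSet.2 h⟩).1 = w}.ncard = (F w).card := by
        intro w
        rw [Set.ncard_eq_toFinset_card']
        refine Finset.card_bij (fun u hu =>
          (⟨s(u, w), H.mem_edgeSet.2 (Set.mem_toFinset.1 hu).choose⟩ : H.edgeSet))
          ?_ ?_ ?_
        · intro u hu
          simp only [hF, Finset.mem_filter, Finset.mem_univ, true_and]
          exact (Set.mem_toFinset.1 hu).choose_spec
        · intro u1 hu1 u2 hu2 h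
          have := Subtype.ext_iff.1 h
          exact Sym2.congr_left.1 this
        · intro b hb
          simp only [hF, Finset.mem_filter, Finset.mem_univ, true_and] at hb
          have hwmem : w ∈ b.1 := hb ▸ hhead b
          obtain ⟨u, hbu⟩ := Sym2.mem_iff_exists.1 hwmem
          have hbu' : b.1 = s(u, w) := hbu.trans Sym2.eq_swap
          have hadj : H.Adj u w := H.mem_edgeSet.1 (hbu' ▸ b.2)
          have hbeq : (⟨s(u, w), H.mem_edgeSet.2 hadj⟩ : H.edgeSet) = b :=
            Subtype.ext hbu'.symm
          have hu : u ∈ {u | ∃ h : H.Adj u w,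
              (f ⟨s(u, w), H.mem_edgeSet.2 h⟩).1 = w}.toFinset := by
            rw [Set.mem_toFinset]
            exact ⟨hadj, by rw [hbeq]; exact hb⟩
          exact ⟨u, hu, Subtype.ext hbu'.symm⟩
      have hle : ∀ w : V, (F w).card ≤ ℓ := by
        intro w
        have hinj : Set.InjOn (fun e => (f e).2) ↑(F w) := by
          intro e1 he1 e2 he2 h12
          simp only [hF, Finset.coe_filter, Set.mem_setOf_eq] at he1 he2
          apply hfinj
          exact Prod.ext (he1.2.trans he2.2.symm) h12
        have := Finset.card_le_card_of_injOn (fun e => (f e).2)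
          (fun _ _ => Finset.mem_univ _) hinj
        simpa using this
      have hsum : ∑ w : V, (F w).card = ℓ * Fintype.card V := by
        have h1 : (Finset.univ : Finset H.edgeSet).card = ∑ w : V, (F w).card :=
          Finset.card_eq_sum_card_fiberwise (fun e _ => Finset.mem_univ _)
        rw [← h1, Finset.card_univ, ← Set.toFinset_card, ← Set.ncard_eq_toFinset_card',
          hcount]
      have heach : (F v).card = ℓ := by
        by_contra hne'
        have hlt : (F v).card < ℓ := lt_of_le_of_ne (hle v) hne'
        have hstrict : ∑ w : V, (F w).card < ∑ _w : V, ℓ :=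
          Finset.sum_lt_sum (fun w _ => hle w) ⟨v, Finset.mem_univ v, hlt⟩
        rw [hsum, Finset.sum_const, Finset.card_univ, smul_eq_mul, mul_comm] at hstrict
        exact lt_irrefl _ hstrict
      exact (hCard v).trans heach
end

section
/- Define \varphi_d(\alpha) = h(\alpha) + (d/2) h(1-2\alpha) - (d-1) h(1-\alpha) for \alpha \in (0, 1/2), where h(x) = -x log x. Then for every integer d \ge 3 the function \varphi_d has a unique root \alpha^{fm}_d in (0, 1/2), and \varphi_d(\alpha) < 0 for all \alpha \in (\alpha^{fm}_d, 1/2). -/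
open Real Set

/-- The entropy function `h(x) = -x log x` (with `h(0) = 0`, since `log 0 = 0` in Mathlib). -/
noncomputable def h (x : ℝ) : ℝ := -x * Real.log x

/-- The first-moment entropy function `φ_d`. -/
noncomputable def phi (d : ℕ) (a : ℝ) : ℝ :=
  h a + ((d : ℝ) / 2) * h (1 - 2 * a) - ((d : ℝ) - 1) * h (1 - a)

/-- The derivative of `phi d`. -/
noncomputable def g (d : ℕ) (a : ℝ) : ℝ :=
  -Real.log a + (d : ℝ) * Real.log (1 - 2 * a) - ((d : ℝ) - 1) * Real.log (1 - a)

lemma h_eq : h = fun x : ℝ => -(x * Real.log x) := by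
  funext x; simp [h, neg_mul]

lemma h_continuous : Continuous h := by
  rw [h_eq]; exact Real.continuous_mul_log.neg

lemma phi_continuous (d : ℕ) : Continuous (phi d) := by
  unfold phi
  exact ((h_continuous.add (continuous_const.mul
    (h_continuous.comp (by continuity)))).sub (continuous_const.mul
    (h_continuous.comp (by continuity))))

lemma hasDerivAt_h {x : ℝ} (hx : x ≠ 0) : HasDerivAt h (-(Real.log x + 1)) x := by
  rw [h_eq]; exact (Real.hasDerivAt_mul_log hx).neg

lemma hasDerivAt_phi (d : ℕ) {a : ℝ} (ha : a ∈ Ioo (0 : ℝ) (1 / 2)) :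
    HasDerivAt (phi d) (g d a) a := by
  obtain ⟨ha0, ha2⟩ := ha
  have h2a : (1 : ℝ) - 2 * a ≠ 0 := by nlinarith
  have h1a : (1 : ℝ) - a ≠ 0 := by nlinarith
  have l1 : HasDerivAt (fun a : ℝ => (1 : ℝ) - 2 * a) (-2) a := by
    simpa using ((hasDerivAt_id a).const_mul (2 : ℝ)).const_sub 1
  have l2 : HasDerivAt (fun a : ℝ => (1 : ℝ) - a) (-1) a := by
    simpa using (hasDerivAt_id a).const_sub 1
  have d1 : HasDerivAt h (-(Real.log a + 1)) a := hasDerivAt_h (ne_of_gt ha0)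
  have d2 : HasDerivAt (fun a : ℝ => h (1 - 2 * a)) (-(Real.log (1 - 2 * a) + 1) * (-2)) a :=
    by have := (hasDerivAt_h h2a).comp a l1; exact this
  have d3 : HasDerivAt (fun a : ℝ => h (1 - a)) (-(Real.log (1 - a) + 1) * (-1)) a :=
    (hasDerivAt_h h1a).comp a l2
  have key := (d1.add (d2.const_mul ((d : ℝ) / 2))).sub (d3.const_mul ((d : ℝ) - 1))
  have hval : -(Real.log a + 1) + ((d : ℝ) / 2) * (-(Real.log (1 - 2 * a) + 1) * (-2)) -
      ((d : ℝ) - 1) * (-(Real.log (1 - a) + 1) * (-1)) = g d a := by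
    unfold g; ring
  rw [hval] at key
  exact key

lemma hasDerivAt_g (d : ℕ) {a : ℝ} (ha : a ∈ Ioo (0 : ℝ) (1 / 2)) :
    HasDerivAt (g d) (-a⁻¹ + (d : ℝ) * ((1 - 2 * a)⁻¹ * (-2)) -
      ((d : ℝ) - 1) * ((1 - a)⁻¹ * (-1))) a := by
  obtain ⟨ha0, ha2⟩ := ha
  have h2a : (1 : ℝ) - 2 * a ≠ 0 := by nlinarith
  have h1a : (1 : ℝ) - a ≠ 0 := by nlinarith
  have l1 : HasDerivAt (fun a : ℝ => (1 : ℝ) - 2 * a) (-2) a := by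
    simpa using ((hasDerivAt_id a).const_mul (2 : ℝ)).const_sub 1
  have l2 : HasDerivAt (fun a : ℝ => (1 : ℝ) - a) (-1) a := by
    simpa using (hasDerivAt_id a).const_sub 1
  have d1 : HasDerivAt (fun a : ℝ => Real.log a) a⁻¹ a := Real.hasDerivAt_log (ne_of_gt ha0)
  have d2 : HasDerivAt (fun a : ℝ => Real.log (1 - 2 * a)) ((1 - 2 * a)⁻¹ * (-2)) a :=
    by have := (Real.hasDerivAt_log h2a).comp a l1; exact this
  have d3 : HasDerivAt (fun a : ℝ => Real.log (1 - a)) ((1 - a)⁻¹ * (-1)) a :=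
    (Real.hasDerivAt_log h1a).comp a l2
  exact ((d1.neg).add (d2.const_mul (d : ℝ))).sub (d3.const_mul ((d : ℝ) - 1))

lemma deriv_g_neg (d : ℕ) (hd : 3 ≤ d) {a : ℝ} (ha : a ∈ Ioo (0 : ℝ) (1 / 2)) :
    -a⁻¹ + (d : ℝ) * ((1 - 2 * a)⁻¹ * (-2)) - ((d : ℝ) - 1) * ((1 - a)⁻¹ * (-1)) < 0 := by
  obtain ⟨ha0, ha2⟩ := ha
  have hdr : (3 : ℝ) ≤ d := by exact_mod_cast hd
  have h2a : (0 : ℝ) < 1 - 2 * a := by nlinarith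
  have h1a : (0 : ℝ) < 1 - a := by nlinarith
  have key : ((d : ℝ) - 1) / (1 - a) < 2 * d / (1 - 2 * a) := by
    rw [div_lt_div_iff₀ h1a h2a]
    nlinarith
  have h1 : (0 : ℝ) < a⁻¹ := by positivity
  have e1 : (d : ℝ) * ((1 - 2 * a)⁻¹ * (-2)) = -(2 * d / (1 - 2 * a)) := by
    rw [div_eq_mul_inv]; ring
  have e2 : ((d : ℝ) - 1) * ((1 - a)⁻¹ * (-1)) = -(((d : ℝ) - 1) / (1 - a)) := by
    rw [div_eq_mul_inv]; ring
  rw [e1, e2]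
  linarith

lemma strictConcave_phi (d : ℕ) (hd : 3 ≤ d) :
    StrictConcaveOn ℝ (Icc (0 : ℝ) (1 / 2)) (phi d) := by
  apply StrictAntiOn.strictConcaveOn_of_deriv (convex_Icc _ _)
    (phi_continuous d).continuousOn
  rw [interior_Icc]
  have hderiv : ∀ x ∈ Ioo (0 : ℝ) (1 / 2), deriv (phi d) x = g d x := fun x hx =>
    (hasDerivAt_phi d hx).deriv
  have hg : StrictAntiOn (g d) (Ioo (0 : ℝ) (1 / 2)) := by
    apply strictAntiOn_of_deriv_neg (convex_Ioo _ _)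
    · exact fun x hx => ((hasDerivAt_g d hx).continuousAt).continuousWithinAt
    · rw [interior_Ioo]
      intro x hx
      rw [(hasDerivAt_g d hx).deriv]
      exact deriv_g_neg d hd hx
  intro x hx y hy hxy
  rw [hderiv x hx, hderiv y hy]
  exact hg hx hy hxy

lemma phi_zero (d : ℕ) : phi d 0 = 0 := by simp [phi, h]

lemma phi_half_neg (d : ℕ) (hd : 3 ≤ d) : phi d (1 / 2) < 0 := by
  have hdr : (3 : ℝ) ≤ d := by exact_mod_cast hd
  have hlog : (0 : ℝ) < Real.log 2 := Real.log_pos (by norm_num)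
  have he : phi d (1 / 2) = (2 - (d : ℝ)) * ((1 / 2) * Real.log 2) := by
    simp only [phi, h]
    norm_num
    rw [Real.log_div one_ne_zero two_ne_zero, Real.log_one]
    ring
  rw [he]
  nlinarith

lemma h_one_sub_le {a : ℝ} (_ha0 : 0 < a) (ha1 : a < 1) : h (1 - a) ≤ a := by
  have h1a : (0 : ℝ) < 1 - a := by linarith
  have hlog := Real.log_le_sub_one_of_pos (show (0:ℝ) < (1-a)⁻¹ by positivity)
  rw [Real.log_inv] at hlog
  have hinv : (1 - a)⁻¹ - 1 = a / (1 - a) := by field_simp; ring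
  have key : -Real.log (1 - a) ≤ a / (1 - a) := by rw [← hinv]; exact hlog
  have he : h (1 - a) = (1 - a) * (-Real.log (1 - a)) := by simp [h]; ring
  rw [he]
  calc (1 - a) * (-Real.log (1 - a)) ≤ (1 - a) * (a / (1 - a)) :=
        mul_le_mul_of_nonneg_left key (le_of_lt h1a)
    _ = a := by field_simp

lemma phi_pos_at (d : ℕ) (hd : 3 ≤ d) :
    Real.exp (-(d : ℝ)) ∈ Ioo (0 : ℝ) (1 / 2) ∧ 0 < phi d (Real.exp (-(d : ℝ))) := by
  have hdr : (3 : ℝ) ≤ d := by exact_mod_cast hd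
  set a := Real.exp (-(d : ℝ)) with ha_def
  have ha0 : 0 < a := Real.exp_pos _
  have ha2 : a < 1 / 2 := by
    have h1 : a ≤ Real.exp (-3) := Real.exp_le_exp.2 (by linarith)
    have h2 : Real.exp (-3) < 1 / 2 := by
      rw [Real.exp_neg, inv_lt_comm₀ (Real.exp_pos _) (by norm_num)]
      nlinarith [Real.add_one_le_exp (3 : ℝ)]
    linarith
  have ha1 : a < 1 := by linarith
  refine ⟨⟨ha0, ha2⟩, ?_⟩
  have hterm2 : 0 ≤ ((d : ℝ) / 2) * h (1 - 2 * a) := by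
    have h2a : (0 : ℝ) < 1 - 2 * a := by linarith
    have h2a1 : 1 - 2 * a ≤ 1 := by linarith
    have hh : 0 ≤ h (1 - 2 * a) := by
      have := Real.log_nonpos (le_of_lt h2a) h2a1
      simp only [h, neg_mul]
      nlinarith
    positivity
  have hterm3 : ((d : ℝ) - 1) * h (1 - a) ≤ ((d : ℝ) - 1) * a :=
    mul_le_mul_of_nonneg_left (h_one_sub_le ha0 ha1) (by linarith)
  have hterm1 : h a = (d : ℝ) * a := by
    rw [h_eq]; simp [ha_def, Real.log_exp]; ring
  have hge : phi d a ≥ h a + 0 - ((d : ℝ) - 1) * a := by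
    unfold phi; linarith
  rw [hterm1] at hge
  nlinarith

lemma between_comb {x y z : ℝ} (hxy : x < y) (hyz : y < z) :
    ∃ t s : ℝ, 0 < t ∧ 0 < s ∧ t + s = 1 ∧ t * x + s * z = y := by
  have hzx : (0 : ℝ) < z - x := by linarith
  refine ⟨(z - y) / (z - x), (y - x) / (z - x), div_pos (by linarith) hzx,
    div_pos (by linarith) hzx, ?_, ?_⟩
  · field_simp; ring
  · field_simp [hzx.ne']; ring

theorem stmt_10 (d : ℕ) (hd : 3 ≤ d) :
    ∃ αfm ∈ Ioo (0 : ℝ) (1 / 2),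
      phi d αfm = 0 ∧
      (∀ β ∈ Ioo (0 : ℝ) (1 / 2), phi d β = 0 → β = αfm) ∧
      (∀ β ∈ Ioo (0 : ℝ) (1 / 2), αfm < β → phi d β < 0) := by
  obtain ⟨ha, hpos⟩ := phi_pos_at d hd
  set a0 := Real.exp (-(d : ℝ)) with ha0_def
  have hconc := strictConcave_phi d hd
  have hhalf := phi_half_neg d hd
  have hivt : (0 : ℝ) ∈ phi d '' Ioo a0 (1 / 2) := by
    apply intermediate_value_Ioo' (le_of_lt ha.2) (phi_continuous d).continuousOn
    exact ⟨hhalf, hpos⟩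
  obtain ⟨α, hαmem, hαzero⟩ := hivt
  have hαIoo : α ∈ Ioo (0 : ℝ) (1 / 2) := ⟨lt_trans ha.1 hαmem.1, hαmem.2⟩
  have hneg : ∀ β ∈ Ioo (0 : ℝ) (1 / 2), α < β → phi d β < 0 := by
    intro β hβ hαβ
    obtain ⟨t, s, ht, hs, hts, hcomb⟩ := between_comb hαmem.1 hαβ
    have hlt := hconc.2 (show a0 ∈ Icc (0:ℝ) (1/2) from ⟨ha.1.le, ha.2.le⟩)
      (show β ∈ Icc (0:ℝ) (1/2) from ⟨hβ.1.le, hβ.2.le⟩)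
      (ne_of_lt (lt_trans hαmem.1 hαβ)) ht hs hts
    simp only [smul_eq_mul] at hlt
    rw [hcomb, hαzero] at hlt
    nlinarith [mul_pos ht hpos]
  refine ⟨α, hαIoo, hαzero, ?_, hneg⟩
  intro β hβ hβzero
  by_contra hne
  rcases lt_or_gt_of_ne hne with hlt | hgt
  · obtain ⟨t, s, ht, hs, hts, hcomb⟩ := between_comb hβ.1 hlt
    have hgt' := hconc.2 (show (0:ℝ) ∈ Icc (0:ℝ) (1/2) by constructor <;> norm_num)
      (show α ∈ Icc (0:ℝ) (1/2) from ⟨hαIoo.1.le, hαIoo.2.le⟩)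
      (ne_of_lt hαIoo.1) ht hs hts
    simp only [smul_eq_mul] at hgt'
    rw [hcomb, hβzero, phi_zero, hαzero] at hgt'
    simp at hgt'
  · exact absurd hβzero (ne_of_lt (hneg β hβ hgt))
end
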